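/- With the setup of the RKHM kernel PCA (samples w_1,…,w_n in a Hilbert C*-module over ℂ^{m×m}, Gram matrix G = V Σ V*, principal axes p_s = σ_s^{-1/2} W[v_s,0,…,0]), for each s ∈ {1,…,l} the family {p_j}_{j=1}^s minimizes the trace of the matrix-valued reconstruction error: tr( Σ_{t=1}^n |w_t − Σ_{j=1}^s p̂_j ⟨p̂_j, w_t⟩|² ) over all orthonormal systems {p̂_j}_{j=1}^s ⊆ M with each ⟨p̂_j, p̂_j⟩ of rank one. The minimum value is tr(Σ_t ⟨w_t,w_t⟩) − Σ_{j=1}^s σ_j. -/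

import Mathlib

open scoped Matrix.Norms.L2Operator ComplexOrder
open Matrix

local notation "conj'" => starRingEnd ℂ

/-- A Hilbert C*-module over the C*-algebra `ℂ^{m×m}` of `m × m` complex matrices (with the
operator norm): a right module with a matrix-valued inner product inducing the norm of `M`. -/
structure HilbertModuleMat (m : ℕ) (M : Type*) [NormedAddCommGroup M] where
  smul : M → Matrix (Fin m) (Fin m) ℂ → M
  inner : M → M → Matrix (Fin m) (Fin m) ℂ
  smul_add_vec : ∀ (u v : M) c, smul (u + v) c = smul u c + smul v c
  smul_add_alg : ∀ (u : M) c d, smul u (c + d) = smul u c + smul u d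
  smul_mul : ∀ (u : M) c d, smul u (c * d) = smul (smul u c) d
  smul_one : ∀ u : M, smul u 1 = u
  inner_add_right : ∀ u v w : M, inner u (v + w) = inner u v + inner u w
  inner_smul_right : ∀ (u v : M) c, inner u (smul v c) = inner u v * c
  inner_conj : ∀ u v : M, inner v u = star (inner u v)
  inner_self_posSemidef : ∀ u : M, (inner u u).PosSemidef
  inner_definite : ∀ u : M, inner u u = 0 → u = 0
  norm_eq : ∀ u : M, ‖u‖ = Real.sqrt ‖inner u u‖


namespace HilbertModuleMat

variable {m : ℕ} {M : Type*} [NormedAddCommGroup M] (h : HilbertModuleMat m M)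

lemma inner_add_left (u v w : M) : h.inner (u + v) w = h.inner u w + h.inner v w := by
  rw [h.inner_conj, h.inner_add_right, star_add, ← h.inner_conj, ← h.inner_conj]

lemma inner_smul_left (u v : M) (c) : h.inner (h.smul u c) v = star c * h.inner u v := by
  rw [h.inner_conj, h.inner_smul_right, StarMul.star_mul, ← h.inner_conj]

lemma inner_zero_right (u : M) : h.inner u 0 = 0 := by
  have := h.inner_add_right u 0 0
  simpa using this.symm

lemma inner_zero_left (u : M) : h.inner 0 u = 0 := by
  rw [h.inner_conj, h.inner_zero_right, star_zero]

lemma inner_sub_right (u v w : M) : h.inner u (v - w) = h.inner u v - h.inner u w := by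
  have : h.inner u (v - w + w) = h.inner u (v - w) + h.inner u w := h.inner_add_right _ _ _
  rw [sub_add_cancel] at this
  rw [this, add_sub_cancel_right]

lemma inner_sub_left (u v w : M) : h.inner (u - v) w = h.inner u w - h.inner v w := by
  rw [h.inner_conj, h.inner_sub_right, star_sub, ← h.inner_conj, ← h.inner_conj]

lemma inner_sum_right {ι : Type*} (u : M) (f : ι → M) (s : Finset ι) :
    h.inner u (∑ i ∈ s, f i) = ∑ i ∈ s, h.inner u (f i) := by
  classical
  induction s using Finset.induction with
  | empty => simpa using h.inner_zero_right u
  | insert a s' hx ih =>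
                    rw [Finset.sum_insert hx, Finset.sum_insert hx, h.inner_add_right, ih]

lemma inner_sum_left {ι : Type*} (u : M) (f : ι → M) (s : Finset ι) :
    h.inner (∑ i ∈ s, f i) u = ∑ i ∈ s, h.inner (f i) u := by
  rw [h.inner_conj, h.inner_sum_right, star_sum]
  exact Finset.sum_congr rfl fun i _ => (h.inner_conj _ _).symm

lemma smul_inner_self (q : M)
    (hid : h.inner q q * h.inner q q = h.inner q q) : h.smul q (h.inner q q) = q := by
  have hst : star (h.inner q q) = h.inner q q := (h.inner_self_posSemidef q).isHermitian
  have : h.inner (h.smul q (h.inner q q) - q) (h.smul q (h.inner q q) - q) = 0 := by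
    simp only [h.inner_sub_left, h.inner_sub_right, h.inner_smul_left, h.inner_smul_right,
      hst, hid]
    abel
  have := h.inner_definite _ this
  rwa [sub_eq_zero] at this

lemma rep_general (q : M) (hq : h.smul q (h.inner q q) = q) (x : M) :
    h.inner q q * h.inner q x = h.inner q x := by
  have hst : star (h.inner q q) = h.inner q q := (h.inner_self_posSemidef q).isHermitian
  conv_rhs => rw [← hq, h.inner_smul_left, hst]

/-- Expansion of the reconstruction residual for an orthogonal reproducing family. -/
lemma proj_residual {s : ℕ} (f : Fin s → M) (x : M)
    (horth : ∀ i j, i ≠ j → h.inner (f i) (f j) = 0)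
    (hrep : ∀ j, h.inner (f j) (f j) * h.inner (f j) x = h.inner (f j) x) :
    h.inner (x - ∑ j, h.smul (f j) (h.inner (f j) x))
        (x - ∑ j, h.smul (f j) (h.inner (f j) x)) =
      h.inner x x - ∑ j, (h.inner (f j) x)ᴴ * (h.inner (f j) x) := by
  have hxS : h.inner x (∑ j, h.smul (f j) (h.inner (f j) x))
      = ∑ j, (h.inner (f j) x)ᴴ * (h.inner (f j) x) := by
    rw [h.inner_sum_right]
    refine Finset.sum_congr rfl fun j _ => ?_
    rw [h.inner_smul_right, h.inner_conj, Matrix.star_eq_conjTranspose]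
  have hSx : h.inner (∑ j, h.smul (f j) (h.inner (f j) x)) x
      = ∑ j, (h.inner (f j) x)ᴴ * (h.inner (f j) x) := by
    rw [h.inner_sum_left]
    refine Finset.sum_congr rfl fun j _ => ?_
    rw [h.inner_smul_left, Matrix.star_eq_conjTranspose]
  have hSS : h.inner (∑ j, h.smul (f j) (h.inner (f j) x))
      (∑ j, h.smul (f j) (h.inner (f j) x))
      = ∑ j, (h.inner (f j) x)ᴴ * (h.inner (f j) x) := by
    rw [h.inner_sum_left]
    refine Finset.sum_congr rfl fun j _ => ?_
    rw [h.inner_smul_left, h.inner_sum_right]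
    rw [Finset.sum_eq_single j]
    · rw [h.inner_smul_right, hrep j, Matrix.star_eq_conjTranspose]
    · intro k _ hk
      rw [h.inner_smul_right, horth j k (Ne.symm hk)]
      simp
    · intro hj; exact absurd (Finset.mem_univ j) hj
  rw [h.inner_sub_left, h.inner_sub_right, h.inner_sub_right, hxS, hSx, hSS]
  abel

end HilbertModuleMat

lemma psd_trace_nonneg {k : ℕ} {A : Matrix (Fin k) (Fin k) ℂ} (hA : A.PosSemidef) :
    0 ≤ A.trace := by
  rw [Matrix.trace]
  refine Finset.sum_nonneg fun i _ => ?_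
  have := hA.dotProduct_mulVec_nonneg (Pi.single i 1)
  simpa [dotProduct, Matrix.mulVec, Pi.single_apply, Finset.sum_ite_eq,
    Finset.sum_ite_eq'] using this

lemma trace_eq_one_of_rank_one {k : ℕ} {A : Matrix (Fin k) (Fin k) ℂ}
    (hherm : A.IsHermitian) (hidem : A * A = A) (hrank : A.rank = 1) :
    A.trace = 1 := by
  classical
  have hdiag : star (hherm.eigenvectorUnitary : Matrix (Fin k) (Fin k) ℂ) * A * (hherm.eigenvectorUnitary : Matrix (Fin k) (Fin k) ℂ) = diagonal (RCLike.ofReal ∘ hherm.eigenvalues) := by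
    have := hherm.conjStarAlgAut_star_eigenvectorUnitary
    simpa [Unitary.conjStarAlgAut_apply] using this
  set U : Matrix (Fin k) (Fin k) ℂ := (hherm.eigenvectorUnitary : Matrix (Fin k) (Fin k) ℂ)
    with hU
  have hUU : star U * U = 1 := Unitary.coe_star_mul_self _
  have hUU' : U * star U = 1 := Unitary.coe_mul_star_self _
  have hev : ∀ i, hherm.eigenvalues i = 0 ∨ hherm.eigenvalues i = 1 := by
    intro i
    have hD : (diagonal (RCLike.ofReal ∘ hherm.eigenvalues) : Matrix (Fin k) (Fin k) ℂ) *
        diagonal (RCLike.ofReal ∘ hherm.eigenvalues) =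
        diagonal (RCLike.ofReal ∘ hherm.eigenvalues) := by
      conv_lhs => rw [← hdiag]
      conv_rhs => rw [← hdiag]
      calc star U * A * U * (star U * A * U)
          = star U * (A * (U * star U) * A) * U := by noncomm_ring
        _ = star U * A * U := by
            rw [hUU', Matrix.mul_one, hidem]
    rw [Matrix.diagonal_mul_diagonal] at hD
    have h1 : ((hherm.eigenvalues i : ℂ)) * (hherm.eigenvalues i : ℂ)
        = (hherm.eigenvalues i : ℂ) := by
      have := congrArg (fun B : Matrix (Fin k) (Fin k) ℂ => B i i) hD
      simpa [Matrix.diagonal_apply_eq] using this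
    have h2 : (hherm.eigenvalues i) * (hherm.eigenvalues i) = hherm.eigenvalues i := by
      exact_mod_cast h1
    have h3 : hherm.eigenvalues i * (hherm.eigenvalues i - 1) = 0 := by ring_nf; linarith
    rcases mul_eq_zero.mp h3 with h | h
    · exact Or.inl h
    · exact Or.inr (by linarith)
  have htr : A.trace = ∑ i, (hherm.eigenvalues i : ℂ) := by
    conv_lhs => rw [hherm.spectral_theorem, Unitary.conjStarAlgAut_apply]
    rw [Matrix.trace_mul_comm, ← Matrix.mul_assoc, hUU, Matrix.one_mul, Matrix.trace_diagonal]
    simp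
  have hcard := hherm.rank_eq_card_non_zero_eigs
  rw [hrank] at hcard
  rw [htr]
  have hsum : ∑ i, (hherm.eigenvalues i : ℂ) =
      ((Finset.univ.filter (fun i => hherm.eigenvalues i ≠ 0)).card : ℂ) := by
    rw [Finset.card_eq_sum_ones, ← Finset.sum_filter_add_sum_filter_not Finset.univ
      (fun i => hherm.eigenvalues i ≠ 0) (fun i => (hherm.eigenvalues i : ℂ))]
    have e1 : ∑ x ∈ Finset.univ.filter (fun i => hherm.eigenvalues i ≠ 0),
        ((hherm.eigenvalues x : ℂ)) =
        ∑ x ∈ Finset.univ.filter (fun i => hherm.eigenvalues i ≠ 0), (1 : ℂ) := by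
      refine Finset.sum_congr rfl fun x hx => ?_
      rcases hev x with h0 | h1
      · exact absurd h0 (Finset.mem_filter.mp hx).2
      · rw [h1]; norm_num
    have e2 : ∑ x ∈ Finset.univ.filter (fun i => ¬ hherm.eigenvalues i ≠ 0),
        ((hherm.eigenvalues x : ℂ)) = 0 := by
      refine Finset.sum_eq_zero fun x hx => ?_
      have := (Finset.mem_filter.mp hx).2
      push_neg at this
      rw [this]; norm_num
    rw [e1, e2, add_zero]
    simp
  rw [hsum]
  rw [Fintype.card_subtype] at hcard
  rw [← hcard]
  norm_num

lemma sum_castLE {l s : ℕ} (hs : s ≤ l) (f : Fin l → ℝ) :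
    ∑ j : Fin s, f (Fin.castLE hs j) = ∑ u : Fin l, if (u : ℕ) < s then f u else 0 := by
  classical
  rw [← Finset.sum_filter]
  have hset : Finset.univ.filter (fun u : Fin l => (u : ℕ) < s)
      = Finset.univ.map (Fin.castLEEmb hs) := by
    ext u
    simp only [Finset.mem_filter, Finset.mem_univ, true_and, Finset.mem_map,
      Fin.castLEEmb_apply]
    constructor
    · intro hu; exact ⟨⟨(u : ℕ), hu⟩, by ext; simp⟩
    · rintro ⟨j, rfl⟩; exact j.isLt
  rw [hset, Finset.sum_map]
  rfl

lemma rearrangement {l s : ℕ} (hs : s ≤ l) (σ : Fin l → ℝ)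
    (hσpos : ∀ u, 0 < σ u) (hσmono : ∀ u t, u ≤ t → σ t ≤ σ u)
    (β : Fin s → Fin l → ℝ) (hnn : ∀ j u, 0 ≤ β j u)
    (hrow : ∀ j, ∑ u, β j u ≤ 1) (hcol : ∀ u, ∑ j, β j u ≤ 1) :
    ∑ j : Fin s, ∑ u : Fin l, σ u * β j u ≤ ∑ j : Fin s, σ (Fin.castLE hs j) := by
  classical
  set B : Fin l → ℝ := fun u => ∑ j, β j u with hB
  have hswap : ∑ j : Fin s, ∑ u : Fin l, σ u * β j u = ∑ u : Fin l, σ u * B u := by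
    rw [Finset.sum_comm]
    exact Finset.sum_congr rfl fun u _ => by rw [Finset.mul_sum]
  have hBnn : ∀ u, 0 ≤ B u := fun u => Finset.sum_nonneg fun j _ => hnn j u
  have hBle : ∀ u, B u ≤ 1 := hcol
  have hBtot : ∑ u : Fin l, B u ≤ (s : ℝ) := by
    rw [hB]
    calc ∑ u : Fin l, ∑ j, β j u = ∑ j : Fin s, ∑ u, β j u := Finset.sum_comm
      _ ≤ ∑ j : Fin s, 1 := Finset.sum_le_sum fun j _ => hrow j
      _ = (s : ℝ) := by simp
  set τ : ℝ := if hsl : s < l then σ ⟨s, hsl⟩ else 0 with hτ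
  have hτnn : 0 ≤ τ := by
    rw [hτ]; split
    · exact (hσpos _).le
    · exact le_refl 0
  have key : ∀ u : Fin l, σ u * B u - (if (u : ℕ) < s then σ u else 0)
      ≤ τ * (B u - (if (u : ℕ) < s then 1 else 0)) := by
    intro u
    by_cases hu : (u : ℕ) < s
    · have hτle : τ ≤ σ u := by
        rw [hτ]; split
        · rename_i hsl
          exact hσmono u ⟨s, hsl⟩ (by exact Fin.le_def.mpr (le_of_lt hu))
        · exact (hσpos u).le
      have hb1 : B u - 1 ≤ 0 := by linarith [hBle u]
      rw [if_pos hu, if_pos hu]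
      have := mul_le_mul_of_nonpos_right hτle hb1
      calc σ u * B u - σ u = σ u * (B u - 1) := by ring
        _ ≤ τ * (B u - 1) := by nlinarith
    · have hsl : s < l := lt_of_le_of_lt (le_of_not_gt hu) u.isLt
      have hτge : σ u ≤ τ := by
        rw [hτ, dif_pos hsl]
        exact hσmono ⟨s, hsl⟩ u (Fin.le_def.mpr (le_of_not_gt hu))
      rw [if_neg hu, if_neg hu]
      have := mul_le_mul_of_nonneg_right hτge (hBnn u)
      linarith
  have hind : ∑ u : Fin l, (if (u : ℕ) < s then (1:ℝ) else 0) = (s : ℝ) := by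
    rw [← sum_castLE hs (fun _ => (1:ℝ))]
    simp
  have hsum := Finset.sum_le_sum (fun u (_ : u ∈ Finset.univ) => key u)
  have hRHS : ∑ u : Fin l, τ * (B u - (if (u : ℕ) < s then (1:ℝ) else 0))
      = τ * (∑ u : Fin l, B u - (s : ℝ)) := by
    rw [← Finset.mul_sum, Finset.sum_sub_distrib, hind]
  rw [hRHS, Finset.sum_sub_distrib] at hsum
  have hτfin : τ * (∑ u : Fin l, B u - (s : ℝ)) ≤ 0 :=
    mul_nonpos_of_nonneg_of_nonpos hτnn (sub_nonpos.mpr hBtot)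
  rw [hswap, sum_castLE hs σ]
  linarith [hsum, hτfin]

lemma hvG_lemma {n m l : ℕ} (G : Matrix (Fin n × Fin m) (Fin n × Fin m) ℂ)
    (σ : Fin l → ℝ) (v : Fin l → (Fin n × Fin m → ℂ))
    (hortho : ∀ s t, ∑ a, conj' (v s a) * v t a = if s = t then 1 else 0)
    (hdecomp : ∀ a b, G a b = ∑ s, (σ s : ℂ) * v s a * conj' (v s b))
    (a : Fin l) (b : Fin n × Fin m) :
    ∑ x : Fin n × Fin m, conj' (v a x) * G x b = (σ a : ℂ) * conj' (v a b) := by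
  simp only [hdecomp, Finset.mul_sum]
  rw [Finset.sum_comm]
  have hterm : ∀ u : Fin l, ∑ x : Fin n × Fin m, conj' (v a x) * ((σ u : ℂ) * v u x * conj' (v u b))
      = (if a = u then 1 else 0) * ((σ u : ℂ) * conj' (v u b)) := by
    intro u
    rw [← hortho a u, Finset.sum_mul]
    refine Finset.sum_congr rfl fun x _ => by ring
  simp only [hterm, ite_mul, one_mul, zero_mul]
  simp

/-- A vector `q` is *normalized* if `⟨q,q⟩` is a nonzero idempotent. -/
def HilbertModuleMat.Normalized {m : ℕ} {M : Type*} [NormedAddCommGroup M]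
    (h : HilbertModuleMat m M) (q : M) : Prop :=
  h.inner q q ≠ 0 ∧ h.inner q q * h.inner q q = h.inner q q

/-- The matrix-valued reconstruction error of the samples `w` projected on the family `f`,
traced: `tr Σ_t ⟨w_t − Σ_j f_j⟨f_j,w_t⟩, w_t − Σ_j f_j⟨f_j,w_t⟩⟩`. -/
noncomputable def recErr {m n s : ℕ} {M : Type*} [NormedAddCommGroup M]
    (h : HilbertModuleMat m M) (w : Fin n → M) (f : Fin s → M) : ℂ :=
  (∑ t, h.inner (w t - ∑ j, h.smul (f j) (h.inner (f j) (w t)))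
      (w t - ∑ j, h.smul (f j) (h.inner (f j) (w t)))).trace


lemma recErr_eq {m n s : ℕ} {M : Type*} [NormedAddCommGroup M]
    (h : HilbertModuleMat m M) (w : Fin n → M) (f : Fin s → M)
    (horth : ∀ i j, i ≠ j → h.inner (f i) (f j) = 0)
    (hrep : ∀ j t, h.inner (f j) (f j) * h.inner (f j) (w t) = h.inner (f j) (w t)) :
    recErr h w f = (∑ t, h.inner (w t) (w t)).trace
      - ∑ j, ∑ t, ((h.inner (f j) (w t))ᴴ * (h.inner (f j) (w t))).trace := by
  unfold recErr
  have hres : ∀ t, h.inner (w t - ∑ j, h.smul (f j) (h.inner (f j) (w t)))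
      (w t - ∑ j, h.smul (f j) (h.inner (f j) (w t)))
      = h.inner (w t) (w t) - ∑ j, (h.inner (f j) (w t))ᴴ * (h.inner (f j) (w t)) :=
    fun t => h.proj_residual f (w t) horth (fun j => hrep j t)
  simp only [hres]
  rw [Matrix.trace_sum, Matrix.trace_sum]
  simp only [Matrix.trace_sub, Matrix.trace_sum]
  rw [Finset.sum_sub_distrib, Finset.sum_comm]

lemma hpw_lemma {m n l : ℕ} [NeZero m] {M : Type*} [NormedAddCommGroup M]
    (h : HilbertModuleMat m M) (w : Fin n → M)
    (G : Matrix (Fin n × Fin m) (Fin n × Fin m) ℂ)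
    (hG : ∀ s t i j, G (s, i) (t, j) = h.inner (w s) (w t) i j)
    (σ : Fin l → ℝ) (hσpos : ∀ s, 0 < σ s)
    (v : Fin l → (Fin n × Fin m → ℂ))
    (hortho : ∀ s t, ∑ a, conj' (v s a) * v t a = if s = t then 1 else 0)
    (hdecomp : ∀ a b, G a b = ∑ s, (σ s : ℂ) * v s a * conj' (v s b))
    (p : Fin l → M)
    (hp : ∀ s, p s = ∑ t, h.smul (w t)
      (Matrix.of fun i j =>
        if j = (0 : Fin m) then ((Real.sqrt (σ s))⁻¹ : ℂ) * v s (t, i) else 0))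
    (a : Fin l) (t : Fin n) :
    h.inner (p a) (w t) = Matrix.of (fun i k =>
      if i = (0 : Fin m) then (Real.sqrt (σ a) : ℂ) * conj' (v a (t, k)) else 0) := by
  have hr : (Real.sqrt (σ a))⁻¹ * σ a = Real.sqrt (σ a) := by
    have h1 : Real.sqrt (σ a) ≠ 0 := Real.sqrt_ne_zero'.mpr (hσpos a)
    have h2 : Real.sqrt (σ a) * Real.sqrt (σ a) = σ a := Real.mul_self_sqrt (hσpos a).le
    calc (Real.sqrt (σ a))⁻¹ * σ a = (Real.sqrt (σ a))⁻¹ * (Real.sqrt (σ a) * Real.sqrt (σ a)) := by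
          rw [h2]
      _ = Real.sqrt (σ a) := by rw [← mul_assoc, inv_mul_cancel₀ h1, one_mul]
  have hsqrt : ((Real.sqrt (σ a) : ℂ))⁻¹ * (σ a : ℂ) = (Real.sqrt (σ a) : ℂ) := by
    rw [← Complex.ofReal_inv, ← Complex.ofReal_mul, hr]
  have hstarc : star (((Real.sqrt (σ a) : ℂ))⁻¹) = ((Real.sqrt (σ a) : ℂ))⁻¹ := by
    simp [Complex.star_def, map_inv₀, Complex.conj_ofReal]
  rw [hp a, h.inner_sum_left]
  ext i k
  simp only [h.inner_smul_left, Matrix.sum_apply, Matrix.mul_apply,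
    Matrix.star_eq_conjTranspose, Matrix.conjTranspose_apply, Matrix.of_apply]
  simp only [← hG]
  by_cases hi : i = 0
  · subst hi
    rw [if_pos rfl]
    have hv := hvG_lemma G σ v hortho hdecomp a (t, k)
    rw [Fintype.sum_prod_type] at hv
    have hL : ∀ t' : Fin n, ∀ r : Fin m,
        star (if (0 : Fin m) = 0 then ((Real.sqrt (σ a))⁻¹ : ℂ) * v a (t', r) else 0)
          * G (t', r) (t, k)
        = ((Real.sqrt (σ a) : ℂ))⁻¹ * (conj' (v a (t', r)) * G (t', r) (t, k)) := by
      intro t' r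
      rw [if_pos rfl, star_mul', hstarc, starRingEnd_apply]
      ring
    calc ∑ t' : Fin n, ∑ r : Fin m,
          star (if (0 : Fin m) = 0 then ((Real.sqrt (σ a))⁻¹ : ℂ) * v a (t', r) else 0)
            * G (t', r) (t, k)
        = ((Real.sqrt (σ a) : ℂ))⁻¹ * ∑ t' : Fin n, ∑ r : Fin m,
            conj' (v a (t', r)) * G (t', r) (t, k) := by
          rw [Finset.mul_sum]
          refine Finset.sum_congr rfl fun t' _ => ?_
          rw [Finset.mul_sum]
          exact Finset.sum_congr rfl fun r _ => hL t' r
      _ = (Real.sqrt (σ a) : ℂ) * conj' (v a (t, k)) := by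
          rw [hv, ← mul_assoc, hsqrt]
  · rw [if_neg hi]
    refine Finset.sum_eq_zero fun t' _ => Finset.sum_eq_zero fun r _ => ?_
    rw [if_neg hi, star_zero, zero_mul]

def E00 (m : ℕ) [NeZero m] : Matrix (Fin m) (Fin m) ℂ :=
  Matrix.of fun i k => if i = 0 ∧ k = 0 then 1 else 0

lemma E00_mul_E00 {m : ℕ} [NeZero m] : E00 m * E00 m = E00 m := by
  ext i k
  simp only [Matrix.mul_apply, E00, Matrix.of_apply]
  rw [Finset.sum_eq_single (0 : Fin m)]
  · by_cases hi : i = 0 <;> by_cases hk : k = 0 <;> simp [hi, hk]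
  · intro r _ hr
    simp [hr]
  · simp

lemma E00_trace {m : ℕ} [NeZero m] : (E00 m).trace = 1 := by
  rw [Matrix.trace]
  rw [Finset.sum_eq_single (0 : Fin m)]
  · simp [E00, Matrix.diag]
  · intro r _ hr; simp [E00, Matrix.diag, hr]
  · simp

lemma hpp_lemma {m n l : ℕ} [NeZero m] {M : Type*} [NormedAddCommGroup M]
    (h : HilbertModuleMat m M) (w : Fin n → M)
    (G : Matrix (Fin n × Fin m) (Fin n × Fin m) ℂ)
    (hG : ∀ s t i j, G (s, i) (t, j) = h.inner (w s) (w t) i j)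
    (σ : Fin l → ℝ) (hσpos : ∀ s, 0 < σ s)
    (v : Fin l → (Fin n × Fin m → ℂ))
    (hortho : ∀ s t, ∑ a, conj' (v s a) * v t a = if s = t then 1 else 0)
    (hdecomp : ∀ a b, G a b = ∑ s, (σ s : ℂ) * v s a * conj' (v s b))
    (p : Fin l → M)
    (hp : ∀ s, p s = ∑ t, h.smul (w t)
      (Matrix.of fun i j =>
        if j = (0 : Fin m) then ((Real.sqrt (σ s))⁻¹ : ℂ) * v s (t, i) else 0))
    (a b : Fin l) :
    h.inner (p a) (p b) = if a = b then E00 m else 0 := by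
  have hpw := hpw_lemma h w G hG σ hσpos v hortho hdecomp p hp
  conv_lhs => rw [hp b]
  rw [h.inner_sum_right]
  ext i k
  simp only [h.inner_smul_right, Matrix.sum_apply, Matrix.mul_apply, Matrix.of_apply, hpw]
  by_cases hi : i = 0
  · by_cases hk : k = 0
    · subst hi; subst hk
      have horth' := hortho a b
      rw [Fintype.sum_prod_type] at horth'
      have hterm : ∀ t : Fin n, ∀ r : Fin m,
          (if (0:Fin m) = 0 then (Real.sqrt (σ a) : ℂ) * conj' (v a (t, r)) else 0)
            * (if (0:Fin m) = 0 then ((Real.sqrt (σ b))⁻¹ : ℂ) * v b (t, r) else 0)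
          = ((Real.sqrt (σ a) : ℂ) * ((Real.sqrt (σ b) : ℂ))⁻¹)
            * (conj' (v a (t, r)) * v b (t, r)) := by
        intro t r
        rw [if_pos rfl, if_pos rfl, ← Complex.ofReal_inv]
        push_cast
        ring
      calc ∑ t : Fin n, ∑ r : Fin m,
            (if (0:Fin m) = 0 then (Real.sqrt (σ a) : ℂ) * conj' (v a (t, r)) else 0)
              * (if (0:Fin m) = 0 then ((Real.sqrt (σ b))⁻¹ : ℂ) * v b (t, r) else 0)
          = ((Real.sqrt (σ a) : ℂ) * ((Real.sqrt (σ b) : ℂ))⁻¹)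
              * ∑ t : Fin n, ∑ r : Fin m, conj' (v a (t, r)) * v b (t, r) := by
            rw [Finset.mul_sum]
            refine Finset.sum_congr rfl fun t _ => ?_
            rw [Finset.mul_sum]
            exact Finset.sum_congr rfl fun r _ => hterm t r
        _ = (if a = b then (E00 m) else 0) 0 0 := by
            rw [horth']
            by_cases hab : a = b
            · subst hab
              rw [if_pos rfl, if_pos rfl, mul_one,
                mul_inv_cancel₀ (by exact_mod_cast Real.sqrt_ne_zero'.mpr (hσpos a) :
                  ((Real.sqrt (σ a) : ℂ)) ≠ 0)]
              simp [E00]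
            · rw [if_neg hab, if_neg hab, mul_zero]
              simp
    · rw [show ((if a = b then (E00 m) else 0) i k) = 0 by
        by_cases hab : a = b <;> simp [hab, E00, hk]]
      refine Finset.sum_eq_zero fun t _ => Finset.sum_eq_zero fun r _ => ?_
      rw [if_neg hk, mul_zero]
  · rw [show ((if a = b then (E00 m) else 0) i k) = 0 by
      by_cases hab : a = b <;> simp [hab, E00, hi]]
    refine Finset.sum_eq_zero fun t _ => Finset.sum_eq_zero fun r _ => ?_
    rw [if_neg hi, zero_mul]

lemma energy_p_lemma {m n l : ℕ} [NeZero m] {M : Type*} [NormedAddCommGroup M]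
    (h : HilbertModuleMat m M) (w : Fin n → M)
    (G : Matrix (Fin n × Fin m) (Fin n × Fin m) ℂ)
    (hG : ∀ s t i j, G (s, i) (t, j) = h.inner (w s) (w t) i j)
    (σ : Fin l → ℝ) (hσpos : ∀ s, 0 < σ s)
    (v : Fin l → (Fin n × Fin m → ℂ))
    (hortho : ∀ s t, ∑ a, conj' (v s a) * v t a = if s = t then 1 else 0)
    (hdecomp : ∀ a b, G a b = ∑ s, (σ s : ℂ) * v s a * conj' (v s b))
    (p : Fin l → M)
    (hp : ∀ s, p s = ∑ t, h.smul (w t)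
      (Matrix.of fun i j =>
        if j = (0 : Fin m) then ((Real.sqrt (σ s))⁻¹ : ℂ) * v s (t, i) else 0))
    (a : Fin l) :
    ∑ t, ((h.inner (p a) (w t))ᴴ * (h.inner (p a) (w t))).trace = (σ a : ℂ) := by
  have hpw := hpw_lemma h w G hG σ hσpos v hortho hdecomp p hp
  simp only [hpw]
  have hterm : ∀ t : Fin n,
      ((Matrix.of (fun i k => if i = (0 : Fin m) then (Real.sqrt (σ a) : ℂ)
          * conj' (v a (t, k)) else 0))ᴴ
        * (Matrix.of (fun i k => if i = (0 : Fin m) then (Real.sqrt (σ a) : ℂ)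
          * conj' (v a (t, k)) else 0))).trace
      = ∑ k : Fin m, (σ a : ℂ) * (conj' (v a (t, k)) * v a (t, k)) := by
    intro t
    rw [Matrix.trace]
    refine Finset.sum_congr rfl fun k _ => ?_
    rw [Matrix.diag_apply, Matrix.mul_apply]
    rw [Finset.sum_eq_single (0 : Fin m)]
    · have hsr : star ((Real.sqrt (σ a) : ℂ)) = (Real.sqrt (σ a) : ℂ) := by
        simp [Complex.star_def, Complex.conj_ofReal]
      have h2 : (Real.sqrt (σ a) : ℂ) * (Real.sqrt (σ a) : ℂ) = (σ a : ℂ) := by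
        rw [← Complex.ofReal_mul, Real.mul_self_sqrt (hσpos a).le]
      simp only [starRingEnd_apply, Matrix.conjTranspose_apply, Matrix.of_apply]
      rw [if_true, star_mul', hsr, star_star]
      rw [← h2]
      ring
    · intro r _ hr
      rw [Matrix.conjTranspose_apply, Matrix.of_apply, if_neg hr, star_zero, zero_mul]
    · simp
  simp only [hterm]
  have horth' := hortho a a
  rw [if_pos rfl, Fintype.sum_prod_type] at horth'
  calc ∑ t : Fin n, ∑ k : Fin m, (σ a : ℂ) * (conj' (v a (t, k)) * v a (t, k))
      = (σ a : ℂ) * ∑ t : Fin n, ∑ k : Fin m, conj' (v a (t, k)) * v a (t, k) := by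
        rw [Finset.mul_sum]
        exact Finset.sum_congr rfl fun t _ => (Finset.mul_sum _ _ _).symm
    _ = (σ a : ℂ) := by rw [horth', mul_one]

lemma repP_lemma {m n l : ℕ} [NeZero m] {M : Type*} [NormedAddCommGroup M]
    (h : HilbertModuleMat m M) (w : Fin n → M)
    (G : Matrix (Fin n × Fin m) (Fin n × Fin m) ℂ)
    (hG : ∀ s t i j, G (s, i) (t, j) = h.inner (w s) (w t) i j)
    (σ : Fin l → ℝ) (hσpos : ∀ s, 0 < σ s)
    (v : Fin l → (Fin n × Fin m → ℂ))
    (hortho : ∀ s t, ∑ a, conj' (v s a) * v t a = if s = t then 1 else 0)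
    (hdecomp : ∀ a b, G a b = ∑ s, (σ s : ℂ) * v s a * conj' (v s b))
    (p : Fin l → M)
    (hp : ∀ s, p s = ∑ t, h.smul (w t)
      (Matrix.of fun i j =>
        if j = (0 : Fin m) then ((Real.sqrt (σ s))⁻¹ : ℂ) * v s (t, i) else 0))
    (u : Fin l) (x : M) :
    h.inner (p u) (p u) * h.inner (p u) x = h.inner (p u) x := by
  have hpp := hpp_lemma h w G hG σ hσpos v hortho hdecomp p hp
  refine h.rep_general (p u) ?_ x
  apply h.smul_inner_self
  rw [hpp u u, if_pos rfl, E00_mul_E00]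

lemma w_eq_lemma {m n l : ℕ} [NeZero m] {M : Type*} [NormedAddCommGroup M]
    (h : HilbertModuleMat m M) (w : Fin n → M)
    (G : Matrix (Fin n × Fin m) (Fin n × Fin m) ℂ)
    (hG : ∀ s t i j, G (s, i) (t, j) = h.inner (w s) (w t) i j)
    (σ : Fin l → ℝ) (hσpos : ∀ s, 0 < σ s)
    (v : Fin l → (Fin n × Fin m → ℂ))
    (hortho : ∀ s t, ∑ a, conj' (v s a) * v t a = if s = t then 1 else 0)
    (hdecomp : ∀ a b, G a b = ∑ s, (σ s : ℂ) * v s a * conj' (v s b))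
    (p : Fin l → M)
    (hp : ∀ s, p s = ∑ t, h.smul (w t)
      (Matrix.of fun i j =>
        if j = (0 : Fin m) then ((Real.sqrt (σ s))⁻¹ : ℂ) * v s (t, i) else 0))
    (t : Fin n) :
    w t = ∑ u, h.smul (p u) (h.inner (p u) (w t)) := by
  have hpw := hpw_lemma h w G hG σ hσpos v hortho hdecomp p hp
  have hpp := hpp_lemma h w G hG σ hσpos v hortho hdecomp p hp
  have horthP : ∀ i j, i ≠ j → h.inner (p i) (p j) = 0 := by
    intro i j hij
    rw [hpp i j, if_neg hij]
  have hrepP : ∀ u, h.inner (p u) (p u) * h.inner (p u) (w t) = h.inner (p u) (w t) :=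
    fun u => repP_lemma h w G hG σ hσpos v hortho hdecomp p hp u (w t)
  have h0 := h.proj_residual p (w t) horthP hrepP
  have hz : h.inner (w t - ∑ u, h.smul (p u) (h.inner (p u) (w t)))
      (w t - ∑ u, h.smul (p u) (h.inner (p u) (w t))) = 0 := by
    rw [h0, sub_eq_zero]
    ext k k'
    simp only [Matrix.sum_apply]
    have hGk : h.inner (w t) (w t) k k' = G (t, k) (t, k') := (hG t t k k').symm
    rw [hGk, hdecomp (t, k) (t, k')]
    refine Finset.sum_congr rfl fun u _ => ?_
    rw [hpw u t, Matrix.mul_apply]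
    rw [Finset.sum_eq_single (0 : Fin m)]
    · have hsr : star ((Real.sqrt (σ u) : ℂ)) = (Real.sqrt (σ u) : ℂ) := by
        simp [Complex.star_def, Complex.conj_ofReal]
      have h2 : (Real.sqrt (σ u) : ℂ) * (Real.sqrt (σ u) : ℂ) = (σ u : ℂ) := by
        rw [← Complex.ofReal_mul, Real.mul_self_sqrt (hσpos u).le]
      simp only [starRingEnd_apply, Matrix.conjTranspose_apply, Matrix.of_apply]
      rw [if_true, if_true, star_mul', hsr, star_star]
      rw [← h2]
      ring
    · intro r _ hr
      rw [Matrix.conjTranspose_apply, Matrix.of_apply, if_neg hr, star_zero, zero_mul]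
    · simp
  have := h.inner_definite _ hz
  rwa [sub_eq_zero] at this

lemma bilinear_orth {l : ℕ} {ι κ : Type*} [Fintype ι] [Fintype κ]
    (W : Fin l → ι → ℂ) (τ : Fin l → ℂ)
    (hW : ∀ u u', ∑ x, star (W u x) * W u' x = if u = u' then τ u else 0)
    (z : Fin l → κ → ℂ) :
    ∑ x : ι, ∑ i : κ, star (∑ u, z u i * W u x) * (∑ u, z u i * W u x)
      = ∑ u, τ u * ∑ i : κ, star (z u i) * z u i := by
  rw [Finset.sum_comm]
  have hinner : ∀ i : κ, ∑ x : ι, star (∑ u, z u i * W u x) * (∑ u, z u i * W u x)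
      = ∑ u, (star (z u i) * z u i) * τ u := by
    intro i
    have step1 : ∀ x : ι, star (∑ u, z u i * W u x) * (∑ u, z u i * W u x)
        = ∑ u, ∑ u', (star (z u i) * z u' i) * (star (W u x) * W u' x) := by
      intro x
      rw [star_sum, Finset.sum_mul_sum]
      refine Finset.sum_congr rfl fun u _ => Finset.sum_congr rfl fun u' _ => ?_
      rw [star_mul']
      ring
    simp only [step1]
    rw [Finset.sum_comm]
    refine Finset.sum_congr rfl fun u _ => ?_
    rw [Finset.sum_comm]
    have step2 : ∀ u' : Fin l, ∑ x : ι, (star (z u i) * z u' i) * (star (W u x) * W u' x)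
        = (star (z u i) * z u' i) * (if u = u' then τ u else 0) := by
      intro u'
      rw [← hW u u', Finset.mul_sum]
    simp only [step2]
    simp only [mul_ite, mul_zero]
    rw [Finset.sum_ite_eq (Finset.univ : Finset (Fin l)) u
      (fun u' => star (z u i) * z u' i * τ u)]
    simp
  simp only [hinner]
  rw [Finset.sum_comm]
  refine Finset.sum_congr rfl fun u _ => ?_
  rw [Finset.mul_sum]
  refine Finset.sum_congr rfl fun i _ => by ring

lemma trace_conjTranspose_mul {d : ℕ} (A : Matrix (Fin d) (Fin d) ℂ) :
    (Aᴴ * A).trace = ∑ k, ∑ i, star (A i k) * A i k := by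
  rw [Matrix.trace]
  refine Finset.sum_congr rfl fun k _ => ?_
  rw [Matrix.diag_apply, Matrix.mul_apply]
  exact Finset.sum_congr rfl fun i _ => by rw [Matrix.conjTranspose_apply]

/-- Optimality of RKHM kernel PCA: with the setup of principal axes
`p_s = σ_s^{-1/2} W[v_s,0,…,0]`, for each `s ≤ l` the family `{p_j}_{j≤s}` minimizes the
traced matrix-valued reconstruction error over all orthonormal systems of `s` vectors with
rank-one self inner products, and the minimum value is `tr(Σ_t ⟨w_t,w_t⟩) − Σ_{j≤s} σ_j`. -/
theorem pca_minimizes_reconstruction_error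
    {m n l : ℕ} [NeZero m] {M : Type*} [NormedAddCommGroup M] [CompleteSpace M]
    (h : HilbertModuleMat m M) (w : Fin n → M)
    (G : Matrix (Fin n × Fin m) (Fin n × Fin m) ℂ)
    (hG : ∀ s t i j, G (s, i) (t, j) = h.inner (w s) (w t) i j)
    (σ : Fin l → ℝ) (hσpos : ∀ s, 0 < σ s) (hσmono : ∀ s t, s ≤ t → σ t ≤ σ s)
    (v : Fin l → (Fin n × Fin m → ℂ))
    (hortho : ∀ s t, ∑ a, (starRingEnd ℂ) (v s a) * v t a = if s = t then 1 else 0)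
    (hdecomp : ∀ a b, G a b = ∑ s, (σ s : ℂ) * v s a * (starRingEnd ℂ) (v s b))
    (p : Fin l → M)
    (hp : ∀ s, p s = ∑ t, h.smul (w t)
      (Matrix.of fun i j =>
        if j = (0 : Fin m) then ((Real.sqrt (σ s))⁻¹ : ℂ) * v s (t, i) else 0))
    (s : ℕ) (hs : s ≤ l) :
    recErr h w (fun j : Fin s => p (Fin.castLE hs j)) =
      (∑ t, h.inner (w t) (w t)).trace - ∑ j : Fin s, (σ (Fin.castLE hs j) : ℂ) ∧
    ∀ phat : Fin s → M,
      (∀ i j, i ≠ j → h.inner (phat i) (phat j) = 0) →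
      (∀ j, h.Normalized (phat j) ∧ (h.inner (phat j) (phat j)).rank = 1) →
      recErr h w (fun j : Fin s => p (Fin.castLE hs j)) ≤ recErr h w phat := by
  have hpw := hpw_lemma h w G hG σ hσpos v hortho hdecomp p hp
  have hpp := hpp_lemma h w G hG σ hσpos v hortho hdecomp p hp
  have hrepP : ∀ u x, h.inner (p u) (p u) * h.inner (p u) x = h.inner (p u) x :=
    repP_lemma h w G hG σ hσpos v hortho hdecomp p hp
  have henergy := energy_p_lemma h w G hG σ hσpos v hortho hdecomp p hp
  have hweq := w_eq_lemma h w G hG σ hσpos v hortho hdecomp p hp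
  have horthP : ∀ i j : Fin l, i ≠ j → h.inner (p i) (p j) = 0 := fun i j hij => by
    rw [hpp i j, if_neg hij]
  have horthS : ∀ i j : Fin s, i ≠ j →
      h.inner (p (Fin.castLE hs i)) (p (Fin.castLE hs j)) = 0 := fun i j hij =>
    horthP _ _ fun hc => hij (Fin.castLE_injective hs hc)
  have hval : recErr h w (fun j : Fin s => p (Fin.castLE hs j)) =
      (∑ t, h.inner (w t) (w t)).trace - ∑ j : Fin s, (σ (Fin.castLE hs j) : ℂ) := by
    rw [recErr_eq h w _ horthS (fun j t => hrepP _ (w t))]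
    congr 1
    exact Finset.sum_congr rfl fun j _ => henergy _
  refine ⟨hval, ?_⟩
  intro phat horthQ hnormQ
  have hrepQ : ∀ j x, h.inner (phat j) (phat j) * h.inner (phat j) x = h.inner (phat j) x :=
    fun j x => h.rep_general (phat j) (h.smul_inner_self (phat j) (hnormQ j).1.2) x
  rw [hval, recErr_eq h w phat horthQ (fun j t => hrepQ j (w t))]
  set β : Fin s → Fin l → ℝ :=
    fun j u => ∑ i, Complex.normSq (h.inner (phat j) (p u) i 0) with hβdef
  have hβnn : ∀ j u, 0 ≤ β j u := fun j u =>
    Finset.sum_nonneg fun i _ => Complex.normSq_nonneg _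
  have hpE : ∀ u, h.smul (p u) (E00 m) = p u := by
    intro u
    have hid : h.inner (p u) (p u) * h.inner (p u) (p u) = h.inner (p u) (p u) := by
      rw [hpp u u, if_pos rfl]; exact E00_mul_E00
    have := h.smul_inner_self (p u) hid
    rwa [hpp u u, if_pos rfl] at this
  have hN0 : ∀ j u i k, k ≠ (0 : Fin m) → h.inner (phat j) (p u) i k = 0 := by
    intro j u i k hk
    have hNE : h.inner (phat j) (p u) = h.inner (phat j) (p u) * E00 m := by
      conv_lhs => rw [← hpE u, h.inner_smul_right]
    conv_lhs => rw [hNE]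
    rw [Matrix.mul_apply]
    refine Finset.sum_eq_zero fun r _ => ?_
    have hz : E00 m r k = 0 := by simp [E00, hk]
    rw [hz, mul_zero]
  have hstar_norm : ∀ z : ℂ, star z * z = (Complex.normSq z : ℂ) := by
    intro z
    rw [mul_comm, Complex.star_def, Complex.mul_conj]
  have hβtr : ∀ j u, ((h.inner (phat j) (p u))ᴴ * (h.inner (phat j) (p u))).trace
      = ((β j u : ℝ) : ℂ) := by
    intro j u
    rw [trace_conjTranspose_mul]
    rw [Finset.sum_eq_single (0 : Fin m)]
    · rw [hβdef]
      push_cast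
      exact Finset.sum_congr rfl fun i _ => hstar_norm _
    · intro k _ hk
      exact Finset.sum_eq_zero fun i _ => by rw [hN0 j u i k hk, mul_zero]
    · simp
  have hofreal : ∀ (x : ℝ), (0 : ℂ) ≤ 1 - ((x : ℝ) : ℂ) → x ≤ 1 := by
    intro x hx
    have : ((x : ℝ) : ℂ) ≤ ((1 : ℝ) : ℂ) := by
      rw [← sub_nonneg]
      have h1 : ((1 : ℝ) : ℂ) - ((x : ℝ) : ℂ) = 1 - ((x : ℝ) : ℂ) := by norm_num
      rw [h1]
      exact hx
    exact_mod_cast this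
  have hBess1 : ∀ j, ∑ u, β j u ≤ 1 := by
    intro j
    have hpsd := h.inner_self_posSemidef
      (phat j - ∑ u, h.smul (p u) (h.inner (p u) (phat j)))
    rw [h.proj_residual p (phat j) horthP (fun u => hrepP u (phat j))] at hpsd
    have htr := psd_trace_nonneg hpsd
    have htrQ : (h.inner (phat j) (phat j)).trace = 1 :=
      trace_eq_one_of_rank_one (h.inner_self_posSemidef _).isHermitian
        (hnormQ j).1.2 (hnormQ j).2
    have hX : ∀ u, ((h.inner (p u) (phat j))ᴴ * (h.inner (p u) (phat j))).trace
        = ((β j u : ℝ) : ℂ) := by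
      intro u
      have hconj : h.inner (p u) (phat j) = (h.inner (phat j) (p u))ᴴ := by
        rw [h.inner_conj, Matrix.star_eq_conjTranspose]
      rw [hconj, Matrix.conjTranspose_conjTranspose, Matrix.trace_mul_comm, hβtr j u]
    rw [Matrix.trace_sub, Matrix.trace_sum, htrQ] at htr
    simp only [hX] at htr
    refine hofreal _ ?_
    convert htr using 2
    push_cast
    rfl
  have hBess2 : ∀ u, ∑ j, β j u ≤ 1 := by
    intro u
    have hpsd := h.inner_self_posSemidef
      (p u - ∑ j, h.smul (phat j) (h.inner (phat j) (p u)))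
    rw [h.proj_residual phat (p u) horthQ (fun j => hrepQ j (p u))] at hpsd
    have htr := psd_trace_nonneg hpsd
    rw [Matrix.trace_sub, Matrix.trace_sum, hpp u u, if_pos rfl, E00_trace] at htr
    simp only [hβtr] at htr
    refine hofreal _ ?_
    convert htr using 2
    push_cast
    rfl
  -- energy identity for phat
  have hc : ∀ j t, h.inner (phat j) (w t) = Matrix.of (fun i k =>
      ∑ u, h.inner (phat j) (p u) i 0 * ((Real.sqrt (σ u) : ℂ) * conj' (v u (t, k)))) := by
    intro j t
    conv_lhs => rw [hweq t]
    rw [h.inner_sum_right]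
    ext i k
    simp only [h.inner_smul_right, Matrix.sum_apply, Matrix.mul_apply, hpw, Matrix.of_apply]
    refine Finset.sum_congr rfl fun u _ => ?_
    rw [Finset.sum_eq_single (0 : Fin m)]
    · rw [if_pos rfl]
    · intro r _ hr
      rw [if_neg hr, mul_zero]
    · simp
  have hW : ∀ u u', ∑ x : Fin n × Fin m,
      star ((Real.sqrt (σ u) : ℂ) * conj' (v u x)) * ((Real.sqrt (σ u') : ℂ) * conj' (v u' x))
      = if u = u' then ((σ u : ℝ) : ℂ) else 0 := by
    intro u u'
    have hsr : ∀ a : Fin l, star ((Real.sqrt (σ a) : ℂ)) = (Real.sqrt (σ a) : ℂ) := by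
      intro a
      simp [Complex.star_def, Complex.conj_ofReal]
    have hterm : ∀ x : Fin n × Fin m,
        star ((Real.sqrt (σ u) : ℂ) * conj' (v u x)) * ((Real.sqrt (σ u') : ℂ) * conj' (v u' x))
        = ((Real.sqrt (σ u) : ℂ) * (Real.sqrt (σ u') : ℂ))
          * (star (v u' x) * v u x) := by
      intro x
      simp only [starRingEnd_apply]
      rw [star_mul', hsr u, star_star]
      ring
    simp only [hterm]
    rw [← Finset.mul_sum]
    have horth' := hortho u' u
    simp only [starRingEnd_apply] at horth'
    rw [horth']
    by_cases huu : u = u'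
    · subst huu
      rw [if_pos rfl, if_pos rfl, mul_one, ← Complex.ofReal_mul,
        Real.mul_self_sqrt (hσpos u).le]
    · rw [if_neg (fun hc => huu hc.symm), if_neg huu, mul_zero]
  have hE : ∀ j, ∑ t, ((h.inner (phat j) (w t))ᴴ * (h.inner (phat j) (w t))).trace
      = ((∑ u, σ u * β j u : ℝ) : ℂ) := by
    intro j
    simp only [hc, trace_conjTranspose_mul, Matrix.of_apply]
    have hmerge : ∑ t : Fin n, ∑ k : Fin m, ∑ i : Fin m,
        star (∑ u, h.inner (phat j) (p u) i 0 * ((Real.sqrt (σ u) : ℂ) * conj' (v u (t, k))))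
          * (∑ u, h.inner (phat j) (p u) i 0 * ((Real.sqrt (σ u) : ℂ) * conj' (v u (t, k))))
        = ∑ x : Fin n × Fin m, ∑ i : Fin m,
        star (∑ u, h.inner (phat j) (p u) i 0 * ((Real.sqrt (σ u) : ℂ) * conj' (v u x)))
          * (∑ u, h.inner (phat j) (p u) i 0 * ((Real.sqrt (σ u) : ℂ) * conj' (v u x))) := by
      rw [Fintype.sum_prod_type]
    rw [hmerge, bilinear_orth (fun u x => (Real.sqrt (σ u) : ℂ) * conj' (v u x))
      (fun u => ((σ u : ℝ) : ℂ)) hW (fun u i => h.inner (phat j) (p u) i 0)]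
    push_cast
    refine Finset.sum_congr rfl fun u _ => ?_
    rw [hβdef]
    push_cast
    rw [Finset.mul_sum, Finset.mul_sum]
    refine Finset.sum_congr rfl fun i _ => ?_
    rw [hstar_norm]
  simp only [hE]
  have hRHS : ∑ j : Fin s, ((∑ u, σ u * β j u : ℝ) : ℂ)
      = ((∑ j : Fin s, ∑ u, σ u * β j u : ℝ) : ℂ) := by push_cast; rfl
  rw [hRHS]
  have hfin : ∑ j : Fin s, ∑ u, σ u * β j u ≤ ∑ j : Fin s, σ (Fin.castLE hs j) :=
    rearrangement hs σ hσpos hσmono β hβnn hBess1 hBess2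
  have hC : ((∑ j : Fin s, ∑ u, σ u * β j u : ℝ) : ℂ)
      ≤ ((∑ j : Fin s, σ (Fin.castLE hs j) : ℝ) : ℂ) := Complex.real_le_real.mpr hfin
  have hcast : ∑ j : Fin s, (σ (Fin.castLE hs j) : ℂ)
      = ((∑ j : Fin s, σ (Fin.castLE hs j) : ℝ) : ℂ) := by push_cast; rfl
  rw [hcast]
  exact sub_le_sub_left hC _
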